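/- arXiv:2508.14017 — 2 statements merged into one kernel-verified Lean document; each statement's English description precedes it below -/
import Mathlib

section
/- Let x⊤, x⊥ : ℝ → ℝ be differentiable functions with x⊥(t) ≠ 0 for all t, and suppose (x⊤)' = p⁺·x⊥ − γ·x⊤ and (x⊥)' = p⁻·(x⊥)²/x⊤ − γ·x⊥ for functions p⁺, p⁻ : ℝ → ℝ and a constant γ, where also x⊤(t) ≠ 0 for all t. Then the ratio x(t) = x⊤(t)/x⊥(t) satisfies x' = p⁺ − p⁻. -/
theorem stmt_0
    (xT xB pPlus pMinus : ℝ → ℝ) (γ : ℝ)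
    (hxB : ∀ t, xB t ≠ 0) (hxT : ∀ t, xT t ≠ 0)
    (hT : ∀ t, HasDerivAt xT (pPlus t * xB t - γ * xT t) t)
    (hB : ∀ t, HasDerivAt xB (pMinus t * (xB t)^2 / xT t - γ * xB t) t) :
    ∀ t, HasDerivAt (fun s => xT s / xB s) (pPlus t - pMinus t) t := by
  intro t
  have h : HasDerivAt (fun s => xT s / xB s) _ t := (hT t).div (hB t) (hxB t)
  convert h using 1
  rw [eq_div_iff (pow_ne_zero 2 (hxB t))]
  rw [mul_sub, mul_div_cancel₀ _ (hxT t)]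
  ring
end

section
/- Let x⊤, x⊥ : ℝ → ℝ be differentiable with x⊥(t) ≠ 0 and x⊤(t) ≠ 0 for all t, and let β, γ be constants. Suppose (x⊤)' = β·(x⊤/x⊥) + p⁺·x⊥ − γ·x⊤ and (x⊥)' = β + p⁻·(x⊥)²/x⊤ − γ·x⊥. Then x(t) = x⊤(t)/x⊥(t) satisfies x' = p⁺ − p⁻. -/
theorem stmt_1
    (xT xB pPlus pMinus : ℝ → ℝ) (β γ : ℝ)
    (hxB : ∀ t, xB t ≠ 0) (hxT : ∀ t, xT t ≠ 0)
    (hT : ∀ t, HasDerivAt xT (β * (xT t / xB t) + pPlus t * xB t - γ * xT t) t)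
    (hB : ∀ t, HasDerivAt xB (β + pMinus t * (xB t)^2 / xT t - γ * xB t) t) :
    ∀ t, HasDerivAt (fun s => xT s / xB s) (pPlus t - pMinus t) t := by
  intro t
  have h := (hT t).fun_div (hB t) (hxB t)
  refine h.congr_deriv ?_
  field_simp [hxB t, hxT t]
  ring
end
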